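/- Let X be a nonempty compact metric space with finite covering dimension d, and let T : X → X be a homeomorphism. Then the coloured topological entropy of T is at most the topological entropy of T: h_{top,c}(T) ≤ h_{top}(T). -/

import Mathlib

open Set
open scoped ENNReal

variable {X : Type*}

/-- A finite open cover of `X`. -/
def IsFinOpenCover [TopologicalSpace X] (𝒰 : Finset (Set X)) : Prop :=
  (∀ U ∈ 𝒰, IsOpen U) ∧ ⋃₀ (𝒰 : Set (Set X)) = Set.univ

/-- `𝒲` refines `𝒰`: every member of `𝒲` is contained in some member of `𝒰`. -/
def CoverRefines (𝒲 𝒰 : Finset (Set X)) : Prop :=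
  ∀ W ∈ 𝒲, ∃ U ∈ 𝒰, W ⊆ U

/-- A family of sets is `n`-coloured if it is a union of `n` subfamilies, each consisting of
pairwise disjoint sets. -/
def IsColoured (n : ℕ) (𝒲 : Finset (Set X)) : Prop :=
  letI := Classical.decEq (Set X)
  ∃ f : Fin n → Finset (Set X),
    𝒲 = Finset.univ.biUnion f ∧
    ∀ i : Fin n, ∀ V ∈ f i, ∀ W ∈ f i, V ≠ W → Disjoint V W

/-- Lebesgue covering dimension at most `d`: every finite open cover admits a finite open
refinement of order at most `d + 1`. -/
def CoveringDimLE (X : Type*) [TopologicalSpace X] (d : ℕ) : Prop :=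
  ∀ 𝒰 : Finset (Set X), IsFinOpenCover 𝒰 →
    ∃ 𝒲 : Finset (Set X), IsFinOpenCover 𝒲 ∧ CoverRefines 𝒲 𝒰 ∧
      ∀ x : X, Set.ncard {W : Set X | W ∈ 𝒲 ∧ x ∈ W} ≤ d + 1

/-- The dynamical refinement `𝒰₀ⁿ⁻¹ = ⋁_{j=0}^{n-1} T⁻ʲ(𝒰)`. -/
noncomputable def dynCover (T : X → X) (𝒰 : Finset (Set X)) : ℕ → Finset (Set X)
  | 0 => {Set.univ}
  | n + 1 =>
    letI := Classical.decEq (Set X)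
    (𝒰 ×ˢ dynCover T 𝒰 n).image fun p => p.1 ∩ T ⁻¹' p.2

/-- `N(𝒰)`: the minimal cardinality of a subcover of `𝒰`. -/
noncomputable def coverMin [TopologicalSpace X] (𝒰 : Finset (Set X)) : ℕ :=
  sInf {k | ∃ 𝒱 : Finset (Set X), 𝒱 ⊆ 𝒰 ∧ ⋃₀ (𝒱 : Set (Set X)) = Set.univ ∧ 𝒱.card = k}

/-- `N_c(𝒰)`: the minimal cardinality of a `(d+1)`-coloured open refinement of `𝒰`. -/
noncomputable def colouredMin [TopologicalSpace X] (d : ℕ) (𝒰 : Finset (Set X)) : ℕ :=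
  sInf {k | ∃ 𝒲 : Finset (Set X), IsFinOpenCover 𝒲 ∧ CoverRefines 𝒲 𝒰 ∧
    IsColoured (d + 1) 𝒲 ∧ 𝒲.card = k}

/-- Topological entropy via open covers. -/
noncomputable def topEntropy [TopologicalSpace X] (T : X → X) : ℝ≥0∞ :=
  ⨆ (𝒰 : Finset (Set X)) (_ : IsFinOpenCover 𝒰),
    Filter.atTop.limsup fun n : ℕ =>
      ENNReal.ofReal (Real.log (coverMin (dynCover T 𝒰 n)) / n)

/-- Coloured topological entropy `h_{top,c}`. -/
noncomputable def colouredEntropy [TopologicalSpace X] (d : ℕ) (T : X → X) : ℝ≥0∞ :=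
  ⨆ (𝒰 : Finset (Set X)) (_ : IsFinOpenCover 𝒰),
    Filter.atTop.limsup fun n : ℕ =>
      ENNReal.ofReal (Real.log (colouredMin d (dynCover T 𝒰 n)) / n)


section Auxiliary

open Filter
open scoped NNReal

namespace ColourAux

variable [MetricSpace X]

noncomputable def g (A : Set X) (x : X) : ℝ≥0∞ := EMetric.infEdist x Aᶜ

lemma g_pos {A : Set X} (hA : IsOpen A) {x : X} (hx : x ∈ A) : 0 < g A x := by
  rw [g, pos_iff_ne_zero]
  intro h
  have : x ∈ closure Aᶜ := EMetric.mem_closure_iff_infEdist_zero.2 h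
  rw [closure_compl, hA.interior_eq] at this
  exact this hx

lemma g_eq_zero {A : Set X} {x : X} (hx : x ∉ A) : g A x = 0 :=
  EMetric.infEdist_zero_of_mem hx

/-- The basic "barycentric" refinement sets. -/
def W (𝒜 S : Finset (Set X)) : Set X :=
  ⋂ A ∈ S, (A ∩ ⋂ B ∈ 𝒜, ⋂ _ : B ∉ S, {x | g B x < g A x})

lemma mem_W {𝒜 S : Finset (Set X)} {x : X} :
    x ∈ W 𝒜 S ↔ ∀ A ∈ S, x ∈ A ∧ ∀ B ∈ 𝒜, B ∉ S → g B x < g A x := by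
  simp [W]

lemma isOpen_W {𝒜 S : Finset (Set X)} (hS : ∀ A ∈ S, IsOpen A) : IsOpen (W 𝒜 S) := by
  refine isOpen_biInter_finset fun A hA => (hS A hA).inter ?_
  refine isOpen_biInter_finset fun B _ => ?_
  exact isOpen_iInter_of_finite fun _ =>
    isOpen_lt EMetric.continuous_infEdist EMetric.continuous_infEdist

lemma W_disjoint {𝒜 S S' : Finset (Set X)} (hS : S ⊆ 𝒜) (hS' : S' ⊆ 𝒜)
    (hcard : S.card = S'.card) (hne : S ≠ S') : Disjoint (W 𝒜 S) (W 𝒜 S') := by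
  have h1 : ¬ S ⊆ S' := fun h => hne (Finset.eq_of_subset_of_card_le h hcard.ge)
  have h2 : ¬ S' ⊆ S := fun h => hne (Finset.eq_of_subset_of_card_le h hcard.le).symm
  obtain ⟨A, hAS, hAS'⟩ := Finset.not_subset.1 h1
  obtain ⟨B, hBS', hBS⟩ := Finset.not_subset.1 h2
  rw [Set.disjoint_left]
  intro x hx hx'
  have k1 := (mem_W.1 hx A hAS).2 B (hS' hBS') hBS
  have k2 := (mem_W.1 hx' B hBS').2 A (hS hAS) hAS'
  exact lt_asymm k1 k2

lemma mem_W_filter [DecidableEq (Set X)] [∀ (A : Set X) (x : X), Decidable (x ∈ A)]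
    (𝒜 : Finset (Set X)) (h𝒜 : ∀ A ∈ 𝒜, IsOpen A) (x : X) :
    x ∈ W 𝒜 (𝒜.filter fun A => x ∈ A) := by
  rw [mem_W]
  intro A hA
  rw [Finset.mem_filter] at hA
  refine ⟨hA.2, fun B hB hBx => ?_⟩
  have hxB : x ∉ B := fun h => hBx (Finset.mem_filter.2 ⟨hB, h⟩)
  rw [g_eq_zero hxB]
  exact g_pos (h𝒜 A hA.1) hA.2

/-- Main construction: a `(d+1)`-coloured refinement of cardinality at most `(d+1) * |𝒱|`. -/
lemma exists_coloured_refinement {d : ℕ} (hdim : CoveringDimLE X d)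
    (𝒱 : Finset (Set X)) (hV : IsFinOpenCover 𝒱) :
    ∃ 𝒲 : Finset (Set X), IsFinOpenCover 𝒲 ∧ CoverRefines 𝒲 𝒱 ∧
      IsColoured (d + 1) 𝒲 ∧ 𝒲.card ≤ (d + 1) * 𝒱.card := by
  classical
  obtain ⟨𝒜, h𝒜cov, h𝒜ref, h𝒜ord⟩ := hdim 𝒱 hV
  -- a choice of a target set in `𝒱` for each `A ∈ 𝒜`
  set u : Set X → Set X := fun A => if h : ∃ U ∈ 𝒱, A ⊆ U then h.choose else univ with hu_def
  have hu : ∀ A ∈ 𝒜, u A ∈ 𝒱 ∧ A ⊆ u A := by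
    intro A hA
    have h := h𝒜ref A hA
    simp only [hu_def, dif_pos h]
    exact ⟨h.choose_spec.1, h.choose_spec.2⟩
  -- a representative element of each nonempty finset
  set rep : Finset (Set X) → Set X := fun S => if h : S.Nonempty then h.choose else univ
    with hrep_def
  have hrep : ∀ S : Finset (Set X), S.Nonempty → rep S ∈ S := by
    intro S hS
    simp only [hrep_def, dif_pos hS]
    exact hS.choose_spec
  -- the coloured families
  set P : Fin (d + 1) → Set X → Finset (Finset (Set X)) := fun i V =>
    𝒜.powerset.filter (fun S => S.card = i.1 + 1 ∧ u (rep S) = V) with hP_def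
  set bigV : Fin (d + 1) → Set X → Set X := fun i V => ⋃ S ∈ P i V, W 𝒜 S with hbigV_def
  set f : Fin (d + 1) → Finset (Set X) := fun i => 𝒱.image (bigV i) with hf_def
  set 𝒲 : Finset (Set X) := Finset.univ.biUnion f with h𝒲_def
  -- basic facts about members of P
  have hPmem : ∀ (i : Fin (d+1)) (V : Set X) (S : Finset (Set X)), S ∈ P i V →
      S ⊆ 𝒜 ∧ S.card = i.1 + 1 ∧ u (rep S) = V := by
    intro i V S hS
    simp only [hP_def, Finset.mem_filter, Finset.mem_powerset] at hS
    exact ⟨hS.1, hS.2.1, hS.2.2⟩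
  have hbigV_sub : ∀ (i : Fin (d+1)) (V : Set X), V ∈ 𝒱 → bigV i V ⊆ V := by
    intro i V _ x hx
    simp only [hbigV_def, Set.mem_iUnion] at hx
    obtain ⟨S, hSP, hxS⟩ := hx
    obtain ⟨hS𝒜, hScard, hSu⟩ := hPmem i V S hSP
    have hSne : S.Nonempty := Finset.card_pos.1 (by omega)
    have hrepS := hrep S hSne
    have hx_rep : x ∈ rep S := (mem_W.1 hxS (rep S) hrepS).1
    have := (hu (rep S) (hS𝒜 hrepS)).2
    rw [hSu] at this
    exact this hx_rep
  have hbigV_open : ∀ (i : Fin (d+1)) (V : Set X), IsOpen (bigV i V) := by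
    intro i V
    refine isOpen_biUnion fun S hS => isOpen_W fun A hA => ?_
    exact h𝒜cov.1 A ((hPmem i V S hS).1 hA)
  -- covering
  have hcover : ∀ x : X, ∃ i : Fin (d+1), ∃ V ∈ 𝒱, x ∈ bigV i V := by
    intro x
    set Sx : Finset (Set X) := 𝒜.filter (fun A => x ∈ A) with hSx_def
    have hSxne : Sx.Nonempty := by
      have hx : x ∈ ⋃₀ (𝒜 : Set (Set X)) := h𝒜cov.2 ▸ Set.mem_univ x
      obtain ⟨A, hA, hxA⟩ := hx
      exact ⟨A, Finset.mem_filter.2 ⟨hA, hxA⟩⟩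
    have hSxcard : Sx.card ≤ d + 1 := by
      have h1 : {W : Set X | W ∈ 𝒜 ∧ x ∈ W} = (Sx : Set (Set X)) := by
        ext A; simp [hSx_def]
      have := h𝒜ord x
      rwa [h1, Set.ncard_coe_finset] at this
    have hSxpos : 1 ≤ Sx.card := Finset.card_pos.2 hSxne
    refine ⟨⟨Sx.card - 1, by omega⟩, u (rep Sx), (hu (rep Sx) ?_).1, ?_⟩
    · exact Finset.filter_subset _ _ (hrep Sx hSxne)
    · simp only [hbigV_def, Set.mem_iUnion]
      refine ⟨Sx, ?_, mem_W_filter 𝒜 h𝒜cov.1 x⟩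
      rw [hP_def]
      refine Finset.mem_filter.2 ⟨Finset.mem_powerset.2 (Finset.filter_subset _ _),
        ?_, rfl⟩
      show Sx.card = Sx.card - 1 + 1
      omega
  refine ⟨𝒲, ⟨?_, ?_⟩, ?_, ?_, ?_⟩
  · -- open
    intro Z hZ
    simp only [h𝒲_def, Finset.mem_biUnion, hf_def, Finset.mem_image] at hZ
    obtain ⟨i, _, V, _, rfl⟩ := hZ
    exact hbigV_open i V
  · -- covers
    apply Set.eq_univ_of_forall
    intro x
    obtain ⟨i, V, hV', hx⟩ := hcover x
    refine ⟨bigV i V, ?_, hx⟩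
    rw [Finset.mem_coe, h𝒲_def]
    refine Finset.mem_biUnion.2 ⟨i, Finset.mem_univ i, ?_⟩
    rw [hf_def]
    exact Finset.mem_image_of_mem _ hV'
  · -- refines
    intro Z hZ
    simp only [h𝒲_def, Finset.mem_biUnion, hf_def, Finset.mem_image] at hZ
    obtain ⟨i, _, V, hV', rfl⟩ := hZ
    exact ⟨V, hV', hbigV_sub i V hV'⟩
  · -- coloured
    refine ⟨f, ?_, ?_⟩
    · ext Z
      simp [h𝒲_def]
    · intro i V1 hV1 V2 hV2 hne
      simp only [hf_def, Finset.mem_image] at hV1 hV2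
      obtain ⟨Va, hVa, rfl⟩ := hV1
      obtain ⟨Vb, hVb, rfl⟩ := hV2
      rw [Set.disjoint_left]
      intro x hx1 hx2
      simp only [hbigV_def, Set.mem_iUnion] at hx1 hx2
      obtain ⟨S, hSP, hxS⟩ := hx1
      obtain ⟨S', hSP', hxS'⟩ := hx2
      obtain ⟨hS𝒜, hScard, hSu⟩ := hPmem i Va S hSP
      obtain ⟨hS𝒜', hScard', hSu'⟩ := hPmem i Vb S' hSP'
      have hSne : S ≠ S' := by
        rintro rfl
        exact hne (by rw [← hSu, ← hSu'])
      exact Set.disjoint_left.1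
        (W_disjoint hS𝒜 hS𝒜' (by omega) hSne) hxS hxS'
  · -- cardinality
    calc 𝒲.card ≤ ∑ i : Fin (d+1), (f i).card := Finset.card_biUnion_le
      _ ≤ ∑ _i : Fin (d+1), 𝒱.card := Finset.sum_le_sum fun i _ => Finset.card_image_le
      _ = (d + 1) * 𝒱.card := by simp [Finset.sum_const, mul_comm]

end ColourAux

namespace ColourAux

lemma dynCover_isFinOpenCover' [TopologicalSpace X] {T : X → X} (hT : Continuous T)
    {𝒰 : Finset (Set X)} (h𝒰 : IsFinOpenCover 𝒰) (n : ℕ) :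
    IsFinOpenCover (dynCover T 𝒰 n) := by
  classical
  induction n with
  | zero =>
    constructor
    · intro U hU
      simp only [dynCover, Finset.mem_singleton] at hU
      exact hU ▸ isOpen_univ
    · simp [dynCover]
  | succ n ih =>
    constructor
    · intro U hU
      simp only [dynCover, Finset.mem_image, Finset.mem_product] at hU
      obtain ⟨⟨A, B⟩, ⟨hA, hB⟩, rfl⟩ := hU
      exact (h𝒰.1 A hA).inter ((ih.1 B hB).preimage hT)
    · apply Set.eq_univ_of_forall
      intro x
      have hx1 : x ∈ ⋃₀ (𝒰 : Set (Set X)) := h𝒰.2 ▸ Set.mem_univ x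
      have hx2 : T x ∈ ⋃₀ ((dynCover T 𝒰 n : Finset (Set X)) : Set (Set X)) :=
        ih.2 ▸ Set.mem_univ (T x)
      obtain ⟨A, hA, hxA⟩ := hx1
      obtain ⟨B, hB, hxB⟩ := hx2
      refine ⟨A ∩ T ⁻¹' B, ?_, hxA, hxB⟩
      rw [Finset.mem_coe]
      show _ ∈ dynCover T 𝒰 (n+1)
      simp only [dynCover, Finset.mem_image, Finset.mem_product]
      exact ⟨(A, B), ⟨Finset.mem_coe.1 hA, Finset.mem_coe.1 hB⟩, rfl⟩

lemma coverMin_spec' [TopologicalSpace X] {𝒰 : Finset (Set X)} (h𝒰 : IsFinOpenCover 𝒰) :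
    ∃ 𝒱 : Finset (Set X), 𝒱 ⊆ 𝒰 ∧ ⋃₀ (𝒱 : Set (Set X)) = Set.univ ∧
      𝒱.card = coverMin 𝒰 := by
  have hne : {k | ∃ 𝒱 : Finset (Set X), 𝒱 ⊆ 𝒰 ∧ ⋃₀ (𝒱 : Set (Set X)) = Set.univ ∧
      𝒱.card = k}.Nonempty := ⟨𝒰.card, 𝒰, le_refl _, h𝒰.2, rfl⟩
  exact Nat.sInf_mem hne

lemma one_le_coverMin' [TopologicalSpace X] [Nonempty X] {𝒰 : Finset (Set X)}
    (h𝒰 : IsFinOpenCover 𝒰) : 1 ≤ coverMin 𝒰 := by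
  obtain ⟨𝒱, _, hcov, hcard⟩ := coverMin_spec' h𝒰
  rw [← hcard, Finset.one_le_card]
  rcases Finset.eq_empty_or_nonempty 𝒱 with rfl | h
  · simp only [Finset.coe_empty, Set.sUnion_empty] at hcov
    exact absurd (hcov ▸ Set.mem_univ (Classical.arbitrary X)) (Set.notMem_empty _)
  · exact h

lemma colouredMin_le' [MetricSpace X] {d : ℕ} (hdim : CoveringDimLE X d)
    {𝒞 : Finset (Set X)} (h𝒞 : IsFinOpenCover 𝒞) :
    colouredMin d 𝒞 ≤ (d + 1) * coverMin 𝒞 := by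
  obtain ⟨𝒱, h𝒱sub, h𝒱cov, h𝒱card⟩ := coverMin_spec' h𝒞
  have h𝒱 : IsFinOpenCover 𝒱 := ⟨fun U hU => h𝒞.1 U (h𝒱sub hU), h𝒱cov⟩
  obtain ⟨𝒲, h1, h2, h3, h4⟩ := exists_coloured_refinement hdim 𝒱 h𝒱
  have href : CoverRefines 𝒲 𝒞 := by
    intro Z hZ
    obtain ⟨U, hU, hZU⟩ := h2 Z hZ
    exact ⟨U, h𝒱sub hU, hZU⟩
  calc colouredMin d 𝒞 ≤ 𝒲.card := Nat.sInf_le ⟨𝒲, h1, href, h3, rfl⟩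
    _ ≤ (d+1) * 𝒱.card := h4
    _ = (d+1) * coverMin 𝒞 := by rw [h𝒱card]

lemma limsup_ofReal_le' {u v : ℕ → ℝ≥0∞}
    (h : ∀ ε : ℝ≥0, 0 < ε → ∀ᶠ n in atTop, u n ≤ (ε : ℝ≥0∞) + v n) :
    atTop.limsup u ≤ atTop.limsup v := by
  refine ENNReal.le_of_forall_pos_le_add fun ε hε _ => ?_
  have hb : atTop.IsBoundedUnder (· ≤ ·) v := ⟨⊤, Filter.Eventually.of_forall fun n => le_top⟩
  have hcb : atTop.IsCoboundedUnder (· ≤ ·) v :=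
    Filter.IsBoundedUnder.isCoboundedUnder_le ⟨0, Filter.Eventually.of_forall fun n => zero_le⟩
  calc atTop.limsup u ≤ atTop.limsup (fun n => (ε : ℝ≥0∞) + v n) :=
        Filter.limsup_le_limsup (h ε hε)
    _ = (ε : ℝ≥0∞) + atTop.limsup v := limsup_const_add atTop v (ε : ℝ≥0∞) hb hcb
    _ = atTop.limsup v + (ε : ℝ≥0∞) := add_comm _ _

lemma log_div_le' {d M N n : ℕ} (hN : 1 ≤ N) (hMN : M ≤ (d + 1) * N) {ε : ℝ}
    (hn : 1 ≤ n) (hlog : Real.log (d + 1 : ℕ) / n ≤ ε) :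
    Real.log M / n ≤ ε + Real.log N / n := by
  have hn' : (0:ℝ) < n := by exact_mod_cast hn
  have hlogN : (0:ℝ) ≤ Real.log N := Real.log_natCast_nonneg N
  have hkey : Real.log M ≤ Real.log (d + 1 : ℕ) + Real.log N := by
    rcases Nat.eq_zero_or_pos M with rfl | hM
    · simpa using add_nonneg (Real.log_natCast_nonneg (d+1)) hlogN
    · have h1 : (0:ℝ) < M := by exact_mod_cast hM
      have h2 : (M:ℝ) ≤ ((d+1) * N : ℕ) := by exact_mod_cast hMN
      calc Real.log M ≤ Real.log ((d+1) * N : ℕ) := Real.log_le_log h1 h2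
        _ = Real.log (d + 1 : ℕ) + Real.log N := by
          push_cast
          rw [Real.log_mul (by positivity) (by positivity)]
  calc Real.log M / n ≤ (Real.log (d + 1 : ℕ) + Real.log N) / n := by gcongr
    _ = Real.log (d + 1 : ℕ) / n + Real.log N / n := add_div _ _ _
    _ ≤ ε + Real.log N / n := by gcongr

end ColourAux

end Auxiliary

/-- For a homeomorphism `T` of a nonempty compact metric space of finite
covering dimension `d`, the coloured topological entropy is at most the topological entropy. -/
theorem colouredEntropy_le_topEntropy
    {X : Type*} [MetricSpace X] [CompactSpace X] [Nonempty X] (d : ℕ)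
    (hdim : CoveringDimLE X d) (T : X ≃ₜ X) :
    colouredEntropy d (⇑T) ≤ topEntropy (⇑T) := by
  simp only [colouredEntropy, topEntropy]
  refine iSup₂_le fun 𝒰 h𝒰 => ?_
  refine le_trans ?_ (le_iSup₂ (f := fun (𝒰 : Finset (Set X)) (_ : IsFinOpenCover 𝒰) =>
    Filter.atTop.limsup fun n : ℕ =>
      ENNReal.ofReal (Real.log (coverMin (dynCover (⇑T) 𝒰 n)) / n)) 𝒰 h𝒰)
  apply ColourAux.limsup_ofReal_le'
  intro ε hε
  have h0 : Filter.Tendsto (fun n : ℕ => Real.log (d + 1 : ℕ) / n) Filter.atTop (nhds 0) :=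
    tendsto_const_div_atTop_nhds_zero_nat _
  have h1 : ∀ᶠ n : ℕ in Filter.atTop, Real.log (d + 1 : ℕ) / (n : ℝ) ≤ (ε : ℝ) :=
    h0.eventually (eventually_le_nhds (by exact_mod_cast hε))
  filter_upwards [h1, Filter.eventually_ge_atTop 1] with n hlog hn
  have hdc := ColourAux.dynCover_isFinOpenCover' T.continuous h𝒰 n
  have hMN := ColourAux.colouredMin_le' hdim hdc
  have hN := ColourAux.one_le_coverMin' hdc
  calc ENNReal.ofReal (Real.log (colouredMin d (dynCover (⇑T) 𝒰 n)) / n)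
      ≤ ENNReal.ofReal ((ε : ℝ) + Real.log (coverMin (dynCover (⇑T) 𝒰 n)) / n) :=
        ENNReal.ofReal_le_ofReal (ColourAux.log_div_le' hN hMN hn hlog)
    _ ≤ ENNReal.ofReal (ε : ℝ) +
        ENNReal.ofReal (Real.log (coverMin (dynCover (⇑T) 𝒰 n)) / n) :=
        ENNReal.ofReal_add_le
    _ = (ε : ℝ≥0∞) + ENNReal.ofReal (Real.log (coverMin (dynCover (⇑T) 𝒰 n)) / n) := by
        rw [ENNReal.ofReal_coe_nnreal]
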